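/- The ℚ-linear endomorphism γ of A determined on basis monomials by γ(z) = f(z)·z (z ∈ FreeMagma E) is bijective, fixes every generator, and satisfies γ(u·v) = γ(u) ∗ γ(v) for all u, v ∈ A. In other words, γ is an isomorphism of magmatic algebras from (A, ·) onto (A, ∗). -/

import Mathlib

open scoped BigOperators

/-- The additive extension of the degree function `d : E → ℕ` to the free magma. -/
def FreeMagma.mdeg {E : Type*} (d : E → ℕ) : FreeMagma E → ℕ
  | .of a => d a
  | .mul x y => FreeMagma.mdeg d x + FreeMagma.mdeg d y

/-- The function `f : FreeMagma E → ℕ` defined by `f a = 1` on generators and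
`f (x · y) = |x| · f x · f y`. -/
def FreeMagma.fcoef {E : Type*} (d : E → ℕ) : FreeMagma E → ℕ
  | .of _ => 1
  | .mul x y => FreeMagma.mdeg d x * FreeMagma.fcoef d x * FreeMagma.fcoef d y

/-- The monomial corresponding to an element of the free magma, inside the free
non-unital non-associative algebra. -/
noncomputable def magmaMonomial {E : Type*} (z : FreeMagma E) :
    FreeNonUnitalNonAssocAlgebra ℚ E :=
  MonoidAlgebra.single z (1 : ℚ)

/-- The linear "degree rescaling" sending a monomial `z` to `|z| • z`. -/
noncomputable def degScale {E : Type*} (d : E → ℕ) (p : FreeNonUnitalNonAssocAlgebra ℚ E) :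
    FreeNonUnitalNonAssocAlgebra ℚ E :=
  p.coeff.sum fun z c => MonoidAlgebra.single z ((FreeMagma.mdeg d z : ℚ) * c)

/-- The bilinear product `z ∗ w := |z| • (z · w)`, extended bilinearly from monomials. -/
noncomputable def starProd {E : Type*} (d : E → ℕ)
    (p q : FreeNonUnitalNonAssocAlgebra ℚ E) : FreeNonUnitalNonAssocAlgebra ℚ E :=
  degScale d p * q

namespace GammaAux

variable {E : Type*}

/-- Auxiliary linear map rescaling each monomial's coefficient by `g`. -/
noncomputable def coefMap (g : FreeMagma E → ℚ) :
    FreeNonUnitalNonAssocAlgebra ℚ E →ₗ[ℚ] FreeNonUnitalNonAssocAlgebra ℚ E :=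
  (Finsupp.lsum ℚ fun z => (LinearMap.id : ℚ →ₗ[ℚ] ℚ).smulRight (MonoidAlgebra.single z (g z))) ∘ₗ
    (MonoidAlgebra.coeffLinearEquiv ℚ).toLinearMap

lemma coefMap_single (g : FreeMagma E → ℚ) (z : FreeMagma E) (c : ℚ) :
    coefMap g (MonoidAlgebra.single z c) = MonoidAlgebra.single z (g z * c) := by
  show ((MonoidAlgebra.single z c).coeff.sum
    fun w e => e • MonoidAlgebra.single w (g w)) = _
  rw [MonoidAlgebra.coeff_single, Finsupp.sum_single_index (by simp), MonoidAlgebra.smul_single,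
    smul_eq_mul, mul_comm]

lemma mdeg_pos (d : E → ℕ) (hd : ∀ a : E, 1 ≤ d a) (z : FreeMagma E) :
    0 < FreeMagma.mdeg d z := by
  induction z with
  | ih1 a => exact hd a
  | ih2 x y hx hy => simpa [FreeMagma.mdeg] using Or.inl hx

lemma fcoef_pos (d : E → ℕ) (hd : ∀ a : E, 1 ≤ d a) (z : FreeMagma E) :
    0 < FreeMagma.fcoef d z := by
  induction z with
  | ih1 a => exact Nat.one_pos
  | ih2 x y hx hy =>
      exact Nat.mul_pos (Nat.mul_pos (mdeg_pos d hd x) hx) hy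

lemma single_eq_smul_monomial (z : FreeMagma E) (c : ℚ) :
    (MonoidAlgebra.single z c : FreeNonUnitalNonAssocAlgebra ℚ E) = c • magmaMonomial z := by
  rw [magmaMonomial, MonoidAlgebra.smul_single, smul_eq_mul, mul_one]

lemma gamma_single (d : E → ℕ)
    (γ : FreeNonUnitalNonAssocAlgebra ℚ E →ₗ[ℚ] FreeNonUnitalNonAssocAlgebra ℚ E)
    (hγ : ∀ z : FreeMagma E, γ (magmaMonomial z) = (FreeMagma.fcoef d z : ℚ) • magmaMonomial z)
    (z : FreeMagma E) (c : ℚ) :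
    γ (MonoidAlgebra.single z c) = MonoidAlgebra.single z ((FreeMagma.fcoef d z : ℚ) * c) := by
  rw [single_eq_smul_monomial, map_smul, hγ, single_eq_smul_monomial, smul_smul, mul_comm]

lemma degScale_single (d : E → ℕ) (z : FreeMagma E) (c : ℚ) :
    degScale d (MonoidAlgebra.single z c)
      = MonoidAlgebra.single z ((FreeMagma.mdeg d z : ℚ) * c) := by
  rw [degScale, MonoidAlgebra.coeff_single, Finsupp.sum_single_index (by simp)]

lemma degScale_zero (d : E → ℕ) : degScale d (0 : FreeNonUnitalNonAssocAlgebra ℚ E) = 0 := by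
  simp [degScale]

lemma degScale_add (d : E → ℕ) (p q : FreeNonUnitalNonAssocAlgebra ℚ E) :
    degScale d (p + q) = degScale d p + degScale d q := by
  rw [degScale, degScale, degScale, MonoidAlgebra.coeff_add]
  exact Finsupp.sum_add_index' (by simp) (by intro z c₁ c₂; rw [mul_add]; exact MonoidAlgebra.single_add z _ _)

end GammaAux

/-- The linear endomorphism `γ` of the magma algebra determined on basis monomials by
`γ z = f z • z` is bijective, fixes the generators, and intertwines the magmatic
product `·` with the rescaled product `∗`; i.e. it is an isomorphism of magmatic
algebras from `(A, ·)` onto `(A, ∗)`. -/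
theorem gamma_isomorphism_of_magmatic_products (E : Type*) (d : E → ℕ)
    (hd : ∀ a : E, 1 ≤ d a) :
    (∃ γ : FreeNonUnitalNonAssocAlgebra ℚ E →ₗ[ℚ] FreeNonUnitalNonAssocAlgebra ℚ E,
      ∀ z : FreeMagma E, γ (magmaMonomial z) = (FreeMagma.fcoef d z : ℚ) • magmaMonomial z) ∧
    ∀ γ : FreeNonUnitalNonAssocAlgebra ℚ E →ₗ[ℚ] FreeNonUnitalNonAssocAlgebra ℚ E,
      (∀ z : FreeMagma E, γ (magmaMonomial z) = (FreeMagma.fcoef d z : ℚ) • magmaMonomial z) →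
      Function.Bijective γ ∧
      (∀ a : E, γ (FreeNonUnitalNonAssocAlgebra.of ℚ a) = FreeNonUnitalNonAssocAlgebra.of ℚ a) ∧
      (∀ u v : FreeNonUnitalNonAssocAlgebra ℚ E, γ (u * v) = starProd d (γ u) (γ v)) := by
  classical
  have hfne : ∀ z : FreeMagma E, (FreeMagma.fcoef d z : ℚ) ≠ 0 := fun z => by
    exact_mod_cast (GammaAux.fcoef_pos d hd z).ne'
  constructor
  · refine ⟨GammaAux.coefMap fun z => (FreeMagma.fcoef d z : ℚ), fun z => ?_⟩
    rw [magmaMonomial, GammaAux.coefMap_single, mul_one, GammaAux.single_eq_smul_monomial]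
    rfl
  · intro γ hγ
    have hγs := GammaAux.gamma_single d γ hγ
    refine ⟨?_, ?_, ?_⟩
    · -- bijectivity, with explicit inverse
      set δ := GammaAux.coefMap fun z => ((FreeMagma.fcoef d z : ℚ))⁻¹ with hδ
      have h1 : ∀ p, δ (γ p) = p := by
        intro p
        have : δ.comp γ = LinearMap.id := by
          apply MonoidAlgebra.lhom_ext'
          intro z
          refine LinearMap.ext fun c => ?_
          show δ (γ (MonoidAlgebra.single z c)) = MonoidAlgebra.single z c
          rw [hγs, hδ, GammaAux.coefMap_single, ← mul_assoc, inv_mul_cancel₀ (hfne z), one_mul]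
        exact LinearMap.congr_fun this p
      have h2 : ∀ p, γ (δ p) = p := by
        intro p
        have : γ.comp δ = LinearMap.id := by
          apply MonoidAlgebra.lhom_ext'
          intro z
          refine LinearMap.ext fun c => ?_
          show γ (δ (MonoidAlgebra.single z c)) = MonoidAlgebra.single z c
          rw [hδ, GammaAux.coefMap_single, hγs, ← mul_assoc, mul_inv_cancel₀ (hfne z), one_mul]
        exact LinearMap.congr_fun this p
      exact Function.bijective_iff_has_inverse.mpr ⟨δ, h1, h2⟩
    · intro a
      have : FreeNonUnitalNonAssocAlgebra.of ℚ a = magmaMonomial (FreeMagma.of a) := rfl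
      rw [this, hγ]
      norm_num [FreeMagma.fcoef]
    · intro u v
      unfold starProd
      induction u using MonoidAlgebra.induction_linear with
      | zero => simp [map_zero, GammaAux.degScale_zero]
      | add p q hp hq => rw [add_mul, map_add, map_add, GammaAux.degScale_add, add_mul, hp, hq]
      | single z c =>
          induction v using MonoidAlgebra.induction_linear with
          | zero => simp [map_zero]
          | add p q hp hq => rw [mul_add, map_add, map_add, mul_add, hp, hq]
          | single w e =>
              show γ (MonoidAlgebra.single z c * MonoidAlgebra.single w e) = _
              rw [MonoidAlgebra.single_mul_single, hγs, hγs, hγs,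
                GammaAux.degScale_single, MonoidAlgebra.single_mul_single]
              congr 1
              have hf : FreeMagma.fcoef d (z * w)
                  = FreeMagma.mdeg d z * FreeMagma.fcoef d z * FreeMagma.fcoef d w := rfl
              rw [hf]
              push_cast
              ring
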